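/- A severe antiwithdrawal at the end of a sequence of lexicographic revisions can be eliminated by disjoining the underformula: if B = under(S; L_n,...,L_1), then ∅ lex(L_1) ... lex(L_n) sev(S) is equivalent to ∅ lex(L_1 ∨ B) ... lex(L_n ∨ B) lex(B). -/

import Mathlib

open Set
open scoped Classical

variable {M : Type*}

namespace BeliefRevision

/-- `minSet C P`: the minimal models of `P` according to the total preorder `C`,
i.e. `C(i) ∩ Mod(P)` for the least `i` making this nonempty. -/
noncomputable def minSet : List (Set M) → Set M → Set M
  | [], _ => ∅
  | X :: rest, P => if (X ∩ P).Nonempty then X ∩ P else minSet rest P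

/-- Equivalence of total preorders: same minimal models for every formula. -/
def equivC (C C' : List (Set M)) : Prop :=
  ∀ P : Set M, minSet C P = minSet C' P

/-- A total preorder: an ordered partition (empty classes allowed) of all models. -/
def IsPartition (C : List (Set M)) : Prop :=
  C.Pairwise Disjoint ∧ C.foldr (· ∪ ·) ∅ = Set.univ

/-- Lexicographic revision. -/
def lex (C : List (Set M)) (L : Set M) : List (Set M) :=
  C.map (· ∩ L) ++ C.map (· \ L)

/-- Refinement. -/
def refi (C : List (Set M)) (R : Set M) : List (Set M) :=
  C.flatMap fun X => [X ∩ R, X \ R]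

/-- Natural revision: `[C(i)∩P, C(0),...,C(i-1), C(i)\P, C(i+1),...,C(m)]`. -/
noncomputable def natr : List (Set M) → Set M → List (Set M)
  | [], _ => []
  | X :: rest, P =>
    if (X ∩ P).Nonempty then (X ∩ P) :: (X \ P) :: rest
    else
      match natr rest P with
      | a :: r => a :: X :: r
      | [] => [X]

/-- Severe antiwithdrawal: merge classes `0..i` where `i` is least with `C(i)∩P ≠ ∅`. -/
noncomputable def sevw : List (Set M) → Set M → List (Set M)
  | [], _ => []
  | X :: rest, P =>
    if (X ∩ P).Nonempty then X :: rest
    else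
      match sevw rest P with
      | a :: r => (X ∪ a) :: r
      | [] => [X]

/-- Restrained revision. -/
noncomputable def res : List (Set M) → Set M → List (Set M)
  | [], _ => []
  | X :: rest, P =>
    if (X ∩ P).Nonempty then
      (X ∩ P) :: (X \ P) :: rest.flatMap (fun Y => [Y ∩ P, Y \ P])
    else
      match res rest P with
      | a :: r => a :: (X ∩ P) :: (X \ P) :: r
      | [] => [X ∩ P, X \ P]

/-- Very radical revision. -/
def rad (C : List (Set M)) (P : Set M) : List (Set M) :=
  C.map (· ∩ P) ++ [C.foldr (· ∪ ·) ∅ \ P]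

/-- Severe revision: `[C(i)∩P, (C(0)∪...∪C(i))\P, C(i+1),...,C(m)]`. -/
noncomputable def sevr : List (Set M) → Set M → List (Set M)
  | [], _ => []
  | X :: rest, P =>
    if (X ∩ P).Nonempty then (X ∩ P) :: (X \ P) :: rest
    else
      match sevr rest P with
      | a :: b :: r => a :: (X ∪ b) :: r
      | l => X :: l

/-- Moderate severe revision. -/
noncomputable def msev (C : List (Set M)) (P : Set M) : List (Set M) :=
  C.map (· ∩ P) ++ (sevw C P).map (· \ P)

/-- Merge `A` with the first nonempty class of the list (helper for `psev`). -/
noncomputable def mergeJ (A : Set M) : List (Set M) → List (Set M)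
  | [] => [A]
  | Y :: r => if Y.Nonempty then (A ∪ Y) :: r else mergeJ A r

/-- Plain severe revision:
`[C(i)∩P, C(0)∪...∪(C(i)\P)∪C(j), C(j+1),...,C(m)]` with `i` least with
`C(i)∩P ≠ ∅` and `j` the least index `> i` with `C(j) ≠ ∅`. -/
noncomputable def psev : List (Set M) → Set M → List (Set M)
  | [], _ => []
  | X :: rest, P =>
    if (X ∩ P).Nonempty then (X ∩ P) :: mergeJ (X \ P) rest
    else
      match psev rest P with
      | a :: b :: r => a :: (X ∪ b) :: r
      | l => X :: l

/-- Full meet revision. -/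
noncomputable def full (C : List (Set M)) (P : Set M) : List (Set M) :=
  [minSet C P, Set.univ \ minSet C P]

/-- `maxset F [F₁,...,Fₖ]`: conjoin each `Fᵢ` in order whenever consistent. -/
noncomputable def maxset : Set M → List (Set M) → Set M
  | F, [] => F
  | F, L :: rest => maxset (if (F ∩ L).Nonempty then F ∩ L else F) rest

/-- The underformula `under(S; Lₙ,...,L₁)`. -/
noncomputable def under : Set M → List (Set M) → Set M
  | _, [] => Set.univ
  | S, L :: rest =>
    if (S ∩ L).Nonempty then L ∩ under (S ∩ L) rest else L ∪ under S rest

/-- `upTo C S = C(0) ∪ ... ∪ C(i)` where `i` is least with `C(i)∩S ≠ ∅`. -/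
noncomputable def upTo : List (Set M) → Set M → Set M
  | [], _ => ∅
  | X :: rest, S => if (X ∩ S).Nonempty then X else X ∪ upTo rest S

noncomputable def longestAux : Set M → List (Set M) → Set M
  | A, [] => A
  | A, L :: rest => if (A ∩ L).Nonempty then longestAux (A ∩ L) rest else A

/-- Longest consistent conjunction of a sequence of formulas. -/
noncomputable def longest : List (Set M) → Set M
  | [] => Set.univ
  | L :: rest => longestAux L rest

/-- `rev` is a bottom-refining revision on `(C,P)`: it is a revision
(`min(C rev(P),⊤) = min(C,P)`) and, whenever `C(0)∩Mod(P) ≠ ∅`, class zero of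
the result is `C(0)∩Mod(P)` and class one is `C(0)\Mod(P)`. -/
noncomputable def BottomRefining (rev : List (Set M) → Set M → List (Set M))
    (C : List (Set M)) (P : Set M) : Prop :=
  minSet (rev C P) Set.univ = minSet C P ∧
  ((C.getD 0 ∅ ∩ P).Nonempty →
    (rev C P).getD 0 ∅ = C.getD 0 ∅ ∩ P ∧
    (rev C P).getD 1 ∅ = C.getD 0 ∅ \ P)


/-! ### Auxiliary machinery for `sevw_elimination` -/

/-- Selection function: `gsel P [L₁,...,Lₖ]` intersects `P` with each `Lᵢ` in order
whenever the result is nonempty. -/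
noncomputable def gsel : Set M → List (Set M) → Set M
  | P, [] => P
  | P, L :: r => if (P ∩ L).Nonempty then gsel (P ∩ L) r else gsel P r

/-- Union of all classes of a preorder. -/
def unionAll (C : List (Set M)) : Set M := C.foldr (· ∪ ·) ∅

/-- The classes strictly after the first one meeting `S`. -/
noncomputable def sufAfter : List (Set M) → Set M → List (Set M)
  | [], _ => []
  | X :: rest, S => if (X ∩ S).Nonempty then rest else sufAfter rest S

lemma mem_unionAll {C : List (Set M)} {x : M} : x ∈ unionAll C ↔ ∃ X ∈ C, x ∈ X := by
  induction C with
  | nil => simp [unionAll]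
  | cons X r ih =>
      simp only [unionAll, List.foldr_cons, Set.mem_union] at *
      simp [ih]

lemma minSet_subset (C : List (Set M)) (P : Set M) : minSet C P ⊆ P := by
  induction C with
  | nil => simp [minSet]
  | cons X r ih =>
      simp only [minSet]
      split
      · exact Set.inter_subset_right
      · exact ih

lemma minSet_nonempty (C : List (Set M)) (P : Set M)
    (h : ∃ X ∈ C, (X ∩ P).Nonempty) : (minSet C P).Nonempty := by
  induction C with
  | nil => simp at h
  | cons X r ih =>
      by_cases hx : (X ∩ P).Nonempty
      · simp only [minSet, if_pos hx]; exact hx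
      · simp only [minSet, if_neg hx]
        apply ih
        rcases h with ⟨Y, hY, hne⟩
        rcases List.mem_cons.mp hY with rfl | hY
        · exact absurd hne hx
        · exact ⟨Y, hY, hne⟩

lemma minSet_nonempty_iff {C : List (Set M)} (h : unionAll C = Set.univ) (P : Set M) :
    (minSet C P).Nonempty ↔ P.Nonempty := by
  constructor
  · rintro ⟨x, hx⟩
    exact ⟨x, minSet_subset C P hx⟩
  · rintro ⟨x, hx⟩
    have hxC : x ∈ unionAll C := by rw [h]; trivial
    rcases mem_unionAll.mp hxC with ⟨X, hX, hxX⟩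
    exact minSet_nonempty C P ⟨X, hX, ⟨x, hxX, hx⟩⟩

lemma minSet_map_inter (C : List (Set M)) (L P : Set M) :
    minSet (C.map (· ∩ L)) P = minSet C (P ∩ L) := by
  induction C with
  | nil => simp [minSet]
  | cons X r ih =>
      simp only [List.map_cons, minSet]
      have h1 : X ∩ L ∩ P = X ∩ (P ∩ L) := by ext x; simp; tauto
      rw [h1, ih]

lemma minSet_map_diff (C : List (Set M)) (L P : Set M) :
    minSet (C.map (· \ L)) P = minSet C (P \ L) := by
  induction C with
  | nil => simp [minSet]
  | cons X r ih =>
      simp only [List.map_cons, minSet]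
      have h1 : (X \ L) ∩ P = X ∩ (P \ L) := by ext x; simp; tauto
      rw [h1, ih]

lemma minSet_append (A B : List (Set M)) (P : Set M) :
    minSet (A ++ B) P = if (minSet A P).Nonempty then minSet A P else minSet B P := by
  induction A with
  | nil => simp [minSet, Set.not_nonempty_empty]
  | cons X r ih =>
      by_cases hx : (X ∩ P).Nonempty
      · simp [minSet, hx]
      · simp only [List.cons_append, minSet, if_neg hx]
        exact ih

lemma minSet_lex {C : List (Set M)} (h : unionAll C = Set.univ) (L P : Set M) :
    minSet (lex C L) P = if (P ∩ L).Nonempty then minSet C (P ∩ L) else minSet C P := by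
  rw [lex, minSet_append, minSet_map_inter, minSet_map_diff, minSet_nonempty_iff h]
  by_cases hPL : (P ∩ L).Nonempty
  · simp [hPL]
  · have hempty : P ∩ L = ∅ := Set.not_nonempty_iff_eq_empty.mp hPL
    have hPd : P \ L = P := by
      ext x
      constructor
      · exact fun hx => hx.1
      · intro hx
        refine ⟨hx, fun hxL => ?_⟩
        have hmem : x ∈ P ∩ L := ⟨hx, hxL⟩
        simp [hempty] at hmem
    simp [hPL, hPd]

lemma unionAll_append (A B : List (Set M)) :
    unionAll (A ++ B) = unionAll A ∪ unionAll B := by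
  induction A with
  | nil => simp [unionAll]
  | cons X r ih =>
      simp only [List.cons_append, unionAll, List.foldr_cons] at *
      rw [ih, Set.union_assoc]

lemma unionAll_map_inter (C : List (Set M)) (L : Set M) :
    unionAll (C.map (· ∩ L)) = unionAll C ∩ L := by
  induction C with
  | nil => simp [unionAll]
  | cons X r ih =>
      simp only [List.map_cons, unionAll, List.foldr_cons] at *
      rw [ih, Set.union_inter_distrib_right]

lemma unionAll_map_diff (C : List (Set M)) (L : Set M) :
    unionAll (C.map (· \ L)) = unionAll C \ L := by
  induction C with
  | nil => simp [unionAll]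
  | cons X r ih =>
      simp only [List.map_cons, unionAll, List.foldr_cons] at *
      rw [ih, Set.union_diff_distrib]

lemma unionAll_lex (C : List (Set M)) (L : Set M) :
    unionAll (lex C L) = unionAll C := by
  rw [lex, unionAll_append, unionAll_map_inter, unionAll_map_diff,
    Set.inter_union_diff]

lemma unionAll_foldl_lex (Ls : List (Set M)) :
    ∀ C : List (Set M), unionAll (List.foldl lex C Ls) = unionAll C := by
  induction Ls with
  | nil => intro C; rfl
  | cons L r ih =>
      intro C
      rw [List.foldl_cons, ih, unionAll_lex]

lemma cover (Ls : List (Set M)) :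
    unionAll (List.foldl lex [Set.univ] Ls) = Set.univ := by
  rw [unionAll_foldl_lex]
  simp [unionAll]

lemma minSet_fold (Ls : List (Set M)) : ∀ P : Set M,
    minSet (List.foldl lex [Set.univ] Ls) P = gsel P Ls.reverse := by
  induction Ls using List.reverseRecOn with
  | nil =>
      intro P
      simp only [List.foldl_nil, List.reverse_nil, gsel, minSet, Set.univ_inter]
      by_cases hP : P.Nonempty
      · simp [hP]
      · simp [hP, Set.not_nonempty_iff_eq_empty.mp hP]
  | append_singleton Ls L ih =>
      intro P
      rw [List.foldl_append, List.foldl_cons, List.foldl_nil,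
        List.reverse_append, List.reverse_singleton, List.singleton_append,
        minSet_lex (cover Ls)]
      by_cases hPL : (P ∩ L).Nonempty
      · rw [if_pos hPL, ih]
        simp only [gsel, if_pos hPL]
      · rw [if_neg hPL, ih]
        simp only [gsel, if_neg hPL]

lemma sevw_eq {C : List (Set M)} {S : Set M} (h : ∃ X ∈ C, (X ∩ S).Nonempty) :
    sevw C S = upTo C S :: sufAfter C S := by
  induction C with
  | nil => simp at h
  | cons X r ih =>
      by_cases hx : (X ∩ S).Nonempty
      · simp [sevw, upTo, sufAfter, hx]
      · have hr : ∃ Y ∈ r, (Y ∩ S).Nonempty := by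
          rcases h with ⟨Y, hY, hne⟩
          rcases List.mem_cons.mp hY with rfl | hY
          · exact absurd hne hx
          · exact ⟨Y, hY, hne⟩
        simp only [sevw, upTo, sufAfter, if_neg hx]
        rw [ih hr]

lemma minSet_sufAfter {C : List (Set M)} {S P : Set M} (h : P ∩ upTo C S = ∅) :
    minSet (sufAfter C S) P = minSet C P := by
  induction C with
  | nil => simp [sufAfter]
  | cons X r ih =>
      by_cases hx : (X ∩ S).Nonempty
      · simp only [upTo, if_pos hx] at h
        have hXP : ¬ (X ∩ P).Nonempty := by
          rw [Set.inter_comm, h]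
          exact Set.not_nonempty_empty
        simp only [sufAfter, if_pos hx, minSet, if_neg hXP]
      · simp only [upTo, if_neg hx, Set.inter_union_distrib_left] at h
        rw [Set.union_empty_iff] at h
        have hXP : ¬ (X ∩ P).Nonempty := by
          rw [Set.inter_comm, h.1]
          exact Set.not_nonempty_empty
        simp only [sufAfter, if_neg hx, minSet, if_neg hXP]
        exact ih h.2

lemma upTo_map_inter (C : List (Set M)) (L S : Set M) :
    upTo (C.map (· ∩ L)) S = L ∩ upTo C (S ∩ L) := by
  induction C with
  | nil => simp [upTo]
  | cons X r ih =>
      simp only [List.map_cons, upTo]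
      have hc : X ∩ L ∩ S = X ∩ (S ∩ L) := by ext x; simp; tauto
      rw [hc]
      by_cases hx : (X ∩ (S ∩ L)).Nonempty
      · rw [if_pos hx, if_pos hx, Set.inter_comm]
      · rw [if_neg hx, if_neg hx, ih]
        ext x; simp; tauto

lemma upTo_map_diff (C : List (Set M)) {L S : Set M} (hd : S ∩ L = ∅) :
    upTo (C.map (· \ L)) S = upTo C S \ L := by
  have hSL : ∀ x, x ∈ S → x ∉ L := by
    intro x hxS hxL
    have hmem : x ∈ S ∩ L := ⟨hxS, hxL⟩
    simp [hd] at hmem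
  induction C with
  | nil => simp [upTo]
  | cons X r ih =>
      simp only [List.map_cons, upTo]
      have hc : (X \ L) ∩ S = X ∩ S := by
        ext x
        simp only [Set.mem_inter_iff, Set.mem_diff]
        exact ⟨fun h => ⟨h.1.1, h.2⟩, fun h => ⟨⟨h.1, hSL x h.2⟩, h.2⟩⟩
      rw [hc]
      by_cases hx : (X ∩ S).Nonempty
      · rw [if_pos hx, if_pos hx]
      · rw [if_neg hx, if_neg hx, ih, Set.union_diff_distrib]

lemma upTo_append_hit {A : List (Set M)} (B : List (Set M)) {S : Set M}
    (h : ∃ X ∈ A, (X ∩ S).Nonempty) : upTo (A ++ B) S = upTo A S := by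
  induction A with
  | nil => simp at h
  | cons X r ih =>
      by_cases hx : (X ∩ S).Nonempty
      · simp [upTo, hx]
      · have hr : ∃ Y ∈ r, (Y ∩ S).Nonempty := by
          rcases h with ⟨Y, hY, hne⟩
          rcases List.mem_cons.mp hY with rfl | hY
          · exact absurd hne hx
          · exact ⟨Y, hY, hne⟩
        simp only [List.cons_append, List.append_eq, upTo, if_neg hx]
        rw [ih hr]

lemma upTo_append_miss {A : List (Set M)} (B : List (Set M)) {S : Set M}
    (h : ∀ X ∈ A, X ∩ S = ∅) : upTo (A ++ B) S = unionAll A ∪ upTo B S := by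
  induction A with
  | nil => simp [unionAll, upTo]
  | cons X r ih =>
      have hx : ¬ (X ∩ S).Nonempty := by
        rw [h X List.mem_cons_self]
        exact Set.not_nonempty_empty
      simp only [List.cons_append, List.append_eq, upTo, if_neg hx, unionAll, List.foldr_cons]
      rw [ih (fun Y hY => h Y (List.mem_cons_of_mem X hY))]
      rw [Set.union_assoc]
      rfl

lemma upTo_lex {C : List (Set M)} (h : unionAll C = Set.univ) (L S : Set M) :
    upTo (lex C L) S =
      if (S ∩ L).Nonempty then L ∩ upTo C (S ∩ L) else L ∪ upTo C S := by
  by_cases hSL : (S ∩ L).Nonempty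
  · rcases hSL with ⟨x, hx⟩
    have hxC : x ∈ unionAll C := by rw [h]; trivial
    rcases mem_unionAll.mp hxC with ⟨X, hX, hxX⟩
    have hhit : ∃ Y ∈ C.map (· ∩ L), (Y ∩ S).Nonempty :=
      ⟨X ∩ L, List.mem_map_of_mem hX, ⟨x, ⟨⟨hxX, hx.2⟩, hx.1⟩⟩⟩
    rw [lex, upTo_append_hit _ hhit, upTo_map_inter, if_pos ⟨x, hx⟩]
  · have hSL' : S ∩ L = ∅ := Set.not_nonempty_iff_eq_empty.mp hSL
    have hmiss : ∀ Y ∈ C.map (· ∩ L), Y ∩ S = ∅ := by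
      intro Y hY
      rcases List.mem_map.mp hY with ⟨X, _, rfl⟩
      apply Set.subset_empty_iff.mp
      intro x hx
      have hmem : x ∈ S ∩ L := ⟨hx.2, hx.1.2⟩
      rw [hSL'] at hmem
      exact hmem
    rw [lex, upTo_append_miss _ hmiss, unionAll_map_inter, h, Set.univ_inter,
      upTo_map_diff _ hSL', if_neg hSL, Set.union_diff_self]

lemma upTo_fold (Ls : List (Set M)) : ∀ S : Set M, S.Nonempty →
    upTo (List.foldl lex [Set.univ] Ls) S = under S Ls.reverse := by
  induction Ls using List.reverseRecOn with
  | nil =>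
      intro S hS
      simp [upTo, under, Set.univ_inter, hS]
  | append_singleton Ls L ih =>
      intro S hS
      rw [List.foldl_append, List.foldl_cons, List.foldl_nil,
        List.reverse_append, List.reverse_singleton, List.singleton_append,
        upTo_lex (cover Ls)]
      by_cases hSL : (S ∩ L).Nonempty
      · simp only [under, if_pos hSL]
        rw [ih _ hSL]
      · simp only [under, if_neg hSL]
        rw [ih S hS]

lemma gsel_map_of_subset {B Q : Set M} (l : List (Set M)) (h : Q ⊆ B) :
    gsel Q (l.map (· ∪ B)) = Q := by
  induction l with
  | nil => rfl
  | cons L r ih =>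
      have hq : Q ∩ (L ∪ B) = Q :=
        Set.inter_eq_self_of_subset_left (h.trans Set.subset_union_right)
      simp only [List.map_cons, gsel, hq]
      split <;> exact ih

lemma gsel_map_of_disj (l : List (Set M)) : ∀ {Q B : Set M}, Q ∩ B = ∅ →
    gsel Q (l.map (· ∪ B)) = gsel Q l := by
  induction l with
  | nil => intro Q B _; rfl
  | cons L r ih =>
      intro Q B h
      have hq : Q ∩ (L ∪ B) = Q ∩ L := by
        rw [Set.inter_union_distrib_left, h, Set.union_empty]
      simp only [List.map_cons, gsel, hq]
      by_cases hx : (Q ∩ L).Nonempty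
      · rw [if_pos hx, if_pos hx]
        apply ih
        apply Set.subset_empty_iff.mp
        rw [← h]
        exact Set.inter_subset_inter_left B Set.inter_subset_left
      · rw [if_neg hx, if_neg hx]
        exact ih h

/-- A severe antiwithdrawal at the end of a sequence of lexicographic revisions
can be eliminated by disjoining the underformula:
`∅ lex(L₁)...lex(Lₙ) sev(S) ≡ ∅ lex(L₁∨B)...lex(Lₙ∨B) lex(B)`
where `B = under(S; Lₙ,...,L₁)`. -/
theorem sevw_elimination (Ls : List (Set M)) (S B : Set M) (hS : S.Nonempty)
    (hB : B = under S Ls.reverse) :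
    equivC (sevw (Ls.foldl lex [Set.univ]) S)
      (lex ((Ls.map (· ∪ B)).foldl lex [Set.univ]) B) := by
  subst hB
  set B := under S Ls.reverse with hBdef
  intro P
  have hcov := cover (M := M) Ls
  have hex : ∃ X ∈ List.foldl lex [Set.univ] Ls, (X ∩ S).Nonempty := by
    rcases hS with ⟨s, hs⟩
    have hsU : s ∈ unionAll (List.foldl lex [Set.univ] Ls) := by rw [hcov]; trivial
    rcases mem_unionAll.mp hsU with ⟨X, hX, hsX⟩
    exact ⟨X, hX, s, hsX, hs⟩
  have hU : upTo (List.foldl lex [Set.univ] Ls) S = B := upTo_fold Ls S hS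
  show minSet (sevw (List.foldl lex [Set.univ] Ls) S) P = _
  rw [sevw_eq hex, hU, minSet_lex (cover (Ls.map (· ∪ B)))]
  have hrev : (Ls.map (· ∪ B)).reverse = Ls.reverse.map (· ∪ B) := by
    simp [List.map_reverse]
  by_cases hPB : (P ∩ B).Nonempty
  · have hBP : (B ∩ P).Nonempty := by rwa [Set.inter_comm]
    simp only [minSet, if_pos hBP, if_pos hPB]
    rw [minSet_fold, hrev, gsel_map_of_subset _ Set.inter_subset_right,
      Set.inter_comm]
  · have hPBe : P ∩ B = ∅ := Set.not_nonempty_iff_eq_empty.mp hPB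
    have hBP : ¬ (B ∩ P).Nonempty := by rwa [Set.inter_comm] at hPB
    simp only [minSet, if_neg hBP, if_neg hPB]
    rw [minSet_fold, hrev, gsel_map_of_disj _ hPBe]
    rw [minSet_sufAfter (by rw [hU]; exact hPBe), minSet_fold]


end BeliefRevision
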